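/- The 2×2×2 tensor W = e₁⊗e₁⊗e₂ + e₁⊗e₂⊗e₁ + e₂⊗e₁⊗e₁ has tensor rank 3. -/

import Mathlib

/-- The rank of a 3-mode tensor over `ℂ`. -/
noncomputable def rank3 {m n p : ℕ} (T : Fin m → Fin n → Fin p → ℂ) : ℕ :=
  sInf {r : ℕ | ∃ (x : Fin r → Fin m → ℂ) (y : Fin r → Fin n → ℂ) (z : Fin r → Fin p → ℂ),
    ∀ i j k, T i j k = ∑ l, x l i * y l j * z l k}

/-- The `W` state `e₁⊗e₁⊗e₂ + e₁⊗e₂⊗e₁ + e₂⊗e₁⊗e₁ ∈ ℂ²⊗ℂ²⊗ℂ²`. -/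
noncomputable def Wstate : Fin 2 → Fin 2 → Fin 2 → ℂ := fun i j k =>
  (if i = 0 ∧ j = 0 ∧ k = 1 then 1 else 0) +
  (if i = 0 ∧ j = 1 ∧ k = 0 then 1 else 0) +
  (if i = 1 ∧ j = 0 ∧ k = 0 then 1 else 0)

/-- Pure algebra: the 8 equations of a rank-2 decomposition of `W` are inconsistent. -/
lemma w_alg (a0 a1 b0 b1 c0 c1 d0 d1 e0 e1 f0 f1 : ℂ)
    (E000 : (0:ℂ) = a0*c0*e0 + b0*d0*f0)
    (E001 : (1:ℂ) = a0*c0*e1 + b0*d0*f1)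
    (E010 : (1:ℂ) = a0*c1*e0 + b0*d1*f0)
    (E011 : (0:ℂ) = a0*c1*e1 + b0*d1*f1)
    (E100 : (1:ℂ) = a1*c0*e0 + b1*d0*f0)
    (E101 : (0:ℂ) = a1*c0*e1 + b1*d0*f1)
    (E110 : (0:ℂ) = a1*c1*e0 + b1*d1*f0)
    (E111 : (0:ℂ) = a1*c1*e1 + b1*d1*f1) : False := by
  set χ : ℂ := c0*e0*d1*f1 + c1*e1*d0*f0 - c0*e1*d1*f0 - c1*e0*d0*f1 with hχ
  have id1 : (a0*c0*e0 + b0*d0*f0)*(a0*c1*e1 + b0*d1*f1)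
      - (a0*c0*e1 + b0*d0*f1)*(a0*c1*e0 + b0*d1*f0) = a0*b0*χ := by rw [hχ]; ring
  have id2 : (a1*c0*e0 + b1*d0*f0)*(a1*c1*e1 + b1*d1*f1)
      - (a1*c0*e1 + b1*d0*f1)*(a1*c1*e0 + b1*d1*f0) = a1*b1*χ := by rw [hχ]; ring
  rw [← E000, ← E001, ← E010, ← E011] at id1
  rw [← E100, ← E101, ← E110, ← E111] at id2
  have h1 : a0*b0*χ = -1 := by rw [← id1]; norm_num
  have h2 : a1*b1*χ = 0 := by rw [← id2]; norm_num
  have hchi : χ ≠ 0 := by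
    intro hc; rw [hc, mul_zero] at h1; norm_num at h1
  have hab : a1 = 0 ∨ b1 = 0 := by
    rcases mul_eq_zero.1 h2 with h | h
    · exact mul_eq_zero.1 h
    · exact absurd h hchi
  rcases hab with ha | hb
  · -- a1 = 0
    have hB : (b1*d0)*f0 = 1 := by linear_combination -E100 - c0*e0*ha
    have hbd : b1*d0 ≠ 0 := by intro h; rw [h, zero_mul] at hB; exact zero_ne_one hB
    have hf1 : f1 = 0 := by
      have h0 : (b1*d0)*f1 = 0 := by linear_combination -E101 - c0*e1*ha
      exact (mul_eq_zero.1 h0).resolve_left hbd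
    have he1 : (a0*e1)*c0 = 1 := by linear_combination -E001 - b0*d0*hf1
    have hae : a0*e1 ≠ 0 := by intro h; rw [h, zero_mul] at he1; exact zero_ne_one he1
    have hc1 : c1 = 0 := by
      have h0 : (a0*e1)*c1 = 0 := by linear_combination -E011 - b0*d1*hf1
      exact (mul_eq_zero.1 h0).resolve_left hae
    have hb1 : b1 ≠ 0 := fun h => hbd (by rw [h, zero_mul])
    have hdf : d1*f0 = 0 := by
      have h0 : b1*(d1*f0) = 0 := by linear_combination -E110 - c1*e0*ha
      exact (mul_eq_zero.1 h0).resolve_left hb1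
    have : (1:ℂ) = 0 := by linear_combination E010 + a0*e0*hc1 + b0*hdf
    exact one_ne_zero this
  · -- b1 = 0
    have hA : (a1*c0)*e0 = 1 := by linear_combination -E100 - d0*f0*hb
    have hac : a1*c0 ≠ 0 := by intro h; rw [h, zero_mul] at hA; exact zero_ne_one hA
    have he1 : e1 = 0 := by
      have h0 : (a1*c0)*e1 = 0 := by linear_combination -E101 - d0*f1*hb
      exact (mul_eq_zero.1 h0).resolve_left hac
    have hE : (b0*f1)*d0 = 1 := by linear_combination -E001 - a0*c0*he1
    have hbf : b0*f1 ≠ 0 := by intro h; rw [h, zero_mul] at hE; exact zero_ne_one hE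
    have hd1 : d1 = 0 := by
      have h0 : (b0*f1)*d1 = 0 := by linear_combination -E011 - a0*c1*he1
      exact (mul_eq_zero.1 h0).resolve_left hbf
    have ha1 : a1 ≠ 0 := fun h => hac (by rw [h, zero_mul])
    have hce : c1*e0 = 0 := by
      have h0 : a1*(c1*e0) = 0 := by linear_combination -E110 - d1*f0*hb
      exact (mul_eq_zero.1 h0).resolve_left ha1
    have : (1:ℂ) = 0 := by linear_combination E010 + a0*hce + b0*f0*hd1
    exact one_ne_zero this

/-- `W` admits no 2-term decomposition. -/
lemma no_rank2 : ¬ ∃ (x y z : Fin 2 → Fin 2 → ℂ),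
    ∀ i j k, Wstate i j k = ∑ l, x l i * y l j * z l k := by
  rintro ⟨x, y, z, h⟩
  have E : ∀ i j k, Wstate i j k = x 0 i * y 0 j * z 0 k + x 1 i * y 1 j * z 1 k := by
    intro i j k; rw [h]; exact Fin.sum_univ_two _
  have E000 := E 0 0 0; have E001 := E 0 0 1; have E010 := E 0 1 0
  have E011 := E 0 1 1; have E100 := E 1 0 0; have E101 := E 1 0 1
  have E110 := E 1 1 0; have E111 := E 1 1 1
  simp only [Wstate] at E000 E001 E010 E011 E100 E101 E110 E111
  norm_num at E000 E001 E010 E011 E100 E101 E110 E111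
  exact w_alg (x 0 0) (x 0 1) (x 1 0) (x 1 1) (y 0 0) (y 0 1) (y 1 0) (y 1 1)
    (z 0 0) (z 0 1) (z 1 0) (z 1 1) E000 E001 E010 E011 E100 E101 E110 E111

/-- The `W` state has tensor rank 3. -/
theorem rank3_Wstate : rank3 Wstate = 3 := by
  have h3 : 3 ∈ {r : ℕ | ∃ (x : Fin r → Fin 2 → ℂ) (y : Fin r → Fin 2 → ℂ)
      (z : Fin r → Fin 2 → ℂ), ∀ i j k, Wstate i j k = ∑ l, x l i * y l j * z l k} := by
    refine ⟨![![1,0],![1,0],![0,1]], ![![1,0],![0,1],![1,0]], ![![0,1],![1,0],![1,0]], ?_⟩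
    intro i j k
    fin_cases i <;> fin_cases j <;> fin_cases k <;>
      norm_num [Wstate, Fin.sum_univ_three, Matrix.cons_val_two, Matrix.vecHead, Matrix.vecTail]
  apply le_antisymm
  · exact Nat.sInf_le h3
  · apply le_csInf ⟨3, h3⟩
    rintro r ⟨x, y, z, hxyz⟩
    by_contra hlt
    push_neg at hlt
    apply no_rank2
    refine ⟨fun l i => if h : (l:ℕ) < r then x ⟨l, h⟩ i else 0,
            fun l j => if h : (l:ℕ) < r then y ⟨l, h⟩ j else 0,
            fun l k => if h : (l:ℕ) < r then z ⟨l, h⟩ k else 0, ?_⟩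
    intro i j k
    rw [hxyz]
    interval_cases r <;>
      simp [Fin.sum_univ_two, Fin.sum_univ_one]
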